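/- Let B = (b_{ij}) be an n×n nonnegative irreducible real matrix with spectral radius λ₁(B) > 0, and let P = (p_{ij}) be an n×n Markov transition matrix (p_{ij} ≥ 0 and each row of P sums to 1) with a stationary distribution π (π_i ≥ 0, Σ_i π_i = 1, πP = π). Assume P is supported by B, i.e. p_{ij} > 0 implies b_{ij} > 0. Then ln λ₁(B) ≥ Σ_{i,j : p_{ij} > 0} π_i p_{ij} ln(b_{ij}/p_{ij}). -/

import Mathlib

/-- The spectral radius (Perron root) of a real matrix, defined as the supremum of its
real spectrum; for a nonnegative irreducible matrix this is the Perron root. -/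
noncomputable def lam1 {n : Type*} [Fintype n] [DecidableEq n] (A : Matrix n n ℝ) : ℝ :=
  sSup (spectrum ℝ A)

/-- A nonnegative square matrix `B` is irreducible if for all indices `i j` there is a
power `k > 0` with `(B^k) i j > 0`. -/
def Matrix.IrreducibleMat {n : Type*} [Fintype n] [DecidableEq n] (B : Matrix n n ℝ) : Prop :=
  ∀ i j, ∃ k : ℕ, 0 < k ∧ 0 < (B ^ k) i j

open Matrix Finset

set_option linter.unusedSectionVars false

namespace EntropyAux

variable {n : Type*} [Fintype n] [DecidableEq n]

lemma pow_entry_nonneg (B : Matrix n n ℝ) (hB : ∀ i j, 0 ≤ B i j) (k : ℕ) :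
    ∀ i j, 0 ≤ (B ^ k) i j := by
  induction k with
  | zero =>
    intro i j
    rw [pow_zero, Matrix.one_apply]
    split <;> norm_num
  | succ m ih =>
    intro i j
    rw [pow_succ, Matrix.mul_apply]
    exact Finset.sum_nonneg fun l _ => mul_nonneg (ih i l) (hB l j)

lemma exists_pos_of_sum_pos {f : n → ℝ} (h : 0 < ∑ j, f j) : ∃ j, 0 < f j := by
  by_contra hc
  push_neg at hc
  exact absurd (Finset.sum_nonpos fun j _ => hc j) (not_le.mpr h)

lemma row_pos (B : Matrix n n ℝ) (hB : ∀ i j, 0 ≤ B i j) (hirr : Matrix.IrreducibleMat B)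
    (i : n) : ∃ j, 0 < B i j := by
  obtain ⟨k, hk, hpos⟩ := hirr i i
  obtain ⟨m, rfl⟩ := Nat.exists_eq_succ_of_ne_zero hk.ne'
  rw [pow_succ', Matrix.mul_apply] at hpos
  obtain ⟨j, hj⟩ := exists_pos_of_sum_pos hpos
  refine ⟨j, ?_⟩
  rcases lt_or_eq_of_le (hB i j) with h | h
  · exact h
  · rw [← h, zero_mul] at hj; exact absurd hj (lt_irrefl 0)

end EntropyAux

namespace EntropyAux

variable {n : Type*} [Fintype n] [DecidableEq n]

lemma exists_M (B : Matrix n n ℝ) (hB : ∀ i j, 0 ≤ B i j) (hirr : B.IrreducibleMat) :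
    ∃ M : Matrix n n ℝ, (∀ i j, 0 < M i j) ∧ M * B = B * M := by
  classical
  choose k hk hkpos using hirr
  set K : ℕ := ∑ i, ∑ j, k i j with hK
  refine ⟨∑ t ∈ Finset.range (K + 1), B ^ t, ?_, ?_⟩
  · intro i j
    have hkle : k i j ≤ K := by
      calc k i j ≤ ∑ j', k i j' :=
            Finset.single_le_sum (fun j' _ => Nat.zero_le _) (mem_univ j)
        _ ≤ K := Finset.single_le_sum (f := fun i' => ∑ j', k i' j')
            (fun i' _ => Nat.zero_le _) (mem_univ i)
    have hmem : k i j ∈ Finset.range (K + 1) := Finset.mem_range.mpr (Nat.lt_succ_of_le hkle)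
    have hsum : (∑ t ∈ Finset.range (K + 1), B ^ t) i j
        = ∑ t ∈ Finset.range (K + 1), (B ^ t) i j := by
      simp [Matrix.sum_apply]
    rw [hsum]
    calc (0 : ℝ) < (B ^ (k i j)) i j := hkpos i j
      _ ≤ ∑ t ∈ Finset.range (K + 1), (B ^ t) i j :=
          Finset.single_le_sum (fun t _ => pow_entry_nonneg B hB t i j) hmem
  · rw [Finset.sum_mul, Finset.mul_sum]
    exact Finset.sum_congr rfl fun t _ => by rw [← pow_succ, ← pow_succ']

lemma mulVec_pos (M : Matrix n n ℝ) (hM : ∀ i j, 0 < M i j) {z : n → ℝ}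
    (hz : ∀ j, 0 ≤ z j) (hz0 : ∃ j, 0 < z j) (i : n) : 0 < (M *ᵥ z) i := by
  obtain ⟨j, hj⟩ := hz0
  have : (M *ᵥ z) i = ∑ l, M i l * z l := by simp [Matrix.mulVec, dotProduct]
  rw [this]
  exact Finset.sum_pos' (fun l _ => mul_nonneg (hM i l).le (hz l))
    ⟨j, mem_univ j, mul_pos (hM i j) hj⟩

lemma exists_pos_eigenvector [Nonempty n] (B : Matrix n n ℝ) (hB : ∀ i j, 0 ≤ B i j)
    (hirr : B.IrreducibleMat) :
    ∃ (x : n → ℝ) (r : ℝ), (∀ i, 0 < x i) ∧ 0 < r ∧ B *ᵥ x = r • x := by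
  classical
  obtain ⟨M, hMpos, hMB⟩ := exists_M B hB hirr
  set R : ℝ := ∑ i, ∑ j, B i j with hR
  have mulVecapp : ∀ (A : Matrix n n ℝ) (y : n → ℝ) (i : n), (A *ᵥ y) i = ∑ j, A i j * y j := by
    intro A y i; simp [Matrix.mulVec, dotProduct]
  have bound : ∀ (y : n → ℝ) (r : ℝ), (∀ i, 0 < y i) →
      (∀ i, r * y i ≤ (B *ᵥ y) i) → r ≤ R := by
    intro y r hy hle
    obtain ⟨i, -, hi⟩ := Finset.exists_max_image univ y univ_nonempty
    have h1 : r * y i ≤ (∑ j, B i j) * y i := by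
      calc r * y i ≤ (B *ᵥ y) i := hle i
        _ = ∑ j, B i j * y j := mulVecapp B y i
        _ ≤ ∑ j, B i j * y i := Finset.sum_le_sum fun j _ =>
            mul_le_mul_of_nonneg_left (hi j (mem_univ j)) (hB i j)
        _ = (∑ j, B i j) * y i := by rw [Finset.sum_mul]
    have h2 : (∑ j, B i j) ≤ R :=
      Finset.single_le_sum (f := fun i' => ∑ j, B i' j)
        (fun i' _ => Finset.sum_nonneg fun j _ => hB i' j) (mem_univ i)
    exact le_trans (le_of_mul_le_mul_right h1 (hy i)) h2
  set C : Set ((n → ℝ) × ℝ) := {p | p.1 ∈ stdSimplex ℝ n ∧ p.2 ∈ Set.Icc 0 R ∧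
      ∀ i, p.2 * (M *ᵥ p.1) i ≤ (B *ᵥ (M *ᵥ p.1)) i} with hC
  have hcont1 : ∀ (A : Matrix n n ℝ) (i : n),
      Continuous (fun p : (n → ℝ) × ℝ => (A *ᵥ p.1) i) := by
    intro A i
    have : (fun p : (n → ℝ) × ℝ => (A *ᵥ p.1) i)
        = fun p : (n → ℝ) × ℝ => ∑ j, A i j * p.1 j := by
      funext p; exact mulVecapp A p.1 i
    rw [this]
    exact continuous_finset_sum _ fun j _ =>
      (continuous_const.mul ((continuous_apply j).comp continuous_fst))
  have hcomm : ∀ y : n → ℝ, B *ᵥ (M *ᵥ y) = M *ᵥ (B *ᵥ y) := by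
    intro y
    rw [Matrix.mulVec_mulVec, Matrix.mulVec_mulVec, hMB]
  have hCclosed : IsClosed C := by
    have h1 : IsClosed {p : (n → ℝ) × ℝ | p.1 ∈ stdSimplex ℝ n} :=
      (isClosed_stdSimplex ℝ n).preimage continuous_fst
    have h2 : IsClosed {p : (n → ℝ) × ℝ | p.2 ∈ Set.Icc 0 R} :=
      isClosed_Icc.preimage continuous_snd
    have h3 : IsClosed {p : (n → ℝ) × ℝ |
        ∀ i, p.2 * (M *ᵥ p.1) i ≤ (B *ᵥ (M *ᵥ p.1)) i} := by
      have : {p : (n → ℝ) × ℝ | ∀ i, p.2 * (M *ᵥ p.1) i ≤ (B *ᵥ (M *ᵥ p.1)) i}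
          = ⋂ i, {p : (n → ℝ) × ℝ | p.2 * (M *ᵥ p.1) i ≤ (B *ᵥ (M *ᵥ p.1)) i} := by
        ext p; simp
      rw [this]
      refine isClosed_iInter fun i => isClosed_le ?_ ?_
      · exact continuous_snd.mul (hcont1 M i)
      · have : (fun p : (n → ℝ) × ℝ => (B *ᵥ (M *ᵥ p.1)) i)
            = fun p : (n → ℝ) × ℝ => ((B * M) *ᵥ p.1) i := by
          funext p; rw [Matrix.mulVec_mulVec]
        rw [this]; exact hcont1 (B * M) i
    rw [hC]
    exact h1.inter (h2.inter h3)
  have hCcpt : IsCompact C := by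
    refine IsCompact.of_isClosed_subset
      ((isCompact_stdSimplex ℝ n).prod (isCompact_Icc (a := (0:ℝ)) (b := R)))
      hCclosed ?_
    intro p hp; exact Set.mk_mem_prod hp.1 hp.2.1
  have hcard : (0 : ℝ) < (Fintype.card n : ℝ) := by
    exact_mod_cast Fintype.card_pos
  have hR0 : (0 : ℝ) ≤ R := Finset.sum_nonneg fun i _ => Finset.sum_nonneg fun j _ => hB i j
  have hu0 : (fun _ : n => (Fintype.card n : ℝ)⁻¹) ∈ stdSimplex ℝ n := by
    constructor
    · intro i; positivity
    · rw [Finset.sum_const, Finset.card_univ, nsmul_eq_mul,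
        mul_inv_cancel₀ (ne_of_gt hcard)]
  have hCne : C.Nonempty := by
    refine ⟨⟨fun _ => (Fintype.card n : ℝ)⁻¹, 0⟩, hu0, ⟨le_refl 0, hR0⟩, fun i => ?_⟩
    rw [zero_mul, mulVecapp]
    refine Finset.sum_nonneg fun j _ => mul_nonneg (hB i j) ?_
    exact (mulVec_pos M hMpos (fun _ => by positivity) ⟨Classical.arbitrary n, by positivity⟩ j).le
  obtain ⟨p, hpC, hpmax⟩ := hCcpt.exists_isMaxOn hCne continuous_snd.continuousOn
  obtain ⟨hpsim, hpIcc, hple⟩ := hpC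
  set u := p.1
  set r := p.2
  have hupos : ∀ j, 0 ≤ u j := hpsim.1
  have huex : ∃ j, 0 < u j := by
    apply exists_pos_of_sum_pos
    rw [hpsim.2]; norm_num
  set x : n → ℝ := M *ᵥ u with hxdef
  have hxpos : ∀ i, 0 < x i := fun i => mulVec_pos M hMpos hupos huex i
  have heq : ∀ i, (B *ᵥ x) i = r * x i := by
    by_contra hne
    push_neg at hne
    set z : n → ℝ := fun i => (B *ᵥ x) i - r * x i with hz
    have hznn : ∀ i, 0 ≤ z i := fun i => sub_nonneg.mpr (hple i)
    have hzex : ∃ i, 0 < z i := by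
      obtain ⟨i, hi⟩ := hne
      exact ⟨i, lt_of_le_of_ne (hznn i) (fun h => hi (by simpa [hz, sub_eq_zero] using h.symm))⟩
    set w : n → ℝ := M *ᵥ x with hw
    have hwpos : ∀ i, 0 < w i := fun i => mulVec_pos M hMpos (fun j => (hxpos j).le) ⟨_, hxpos (Classical.arbitrary n)⟩ i
    have hMz : ∀ i, 0 < (M *ᵥ z) i := fun i => mulVec_pos M hMpos hznn hzex i
    have hkey : ∀ i, (B *ᵥ w) i = r * w i + (M *ᵥ z) i := by
      intro i
      have h1 : B *ᵥ w = M *ᵥ (B *ᵥ x) := by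
        rw [hw]; exact hcomm x
      have h2 : (M *ᵥ z) i = (M *ᵥ (B *ᵥ x)) i - r * (M *ᵥ x) i := by
        have : z = (B *ᵥ x) - r • x := by funext l; simp [hz, Pi.sub_apply, Pi.smul_apply, smul_eq_mul]
        rw [this, Matrix.mulVec_sub, Matrix.mulVec_smul]
        simp [Pi.sub_apply, Pi.smul_apply, smul_eq_mul]
      rw [h1, h2]
      simp [hw]
    set ε : ℝ := univ.inf' univ_nonempty (fun i => (M *ᵥ z) i / w i) with hε
    have hεpos : 0 < ε := by
      rw [hε, Finset.lt_inf'_iff]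
      exact fun i _ => div_pos (hMz i) (hwpos i)
    have hεle : ∀ i, ε ≤ (M *ᵥ z) i / w i := fun i => Finset.inf'_le _ (mem_univ i)
    have hwineq : ∀ i, (r + ε) * w i ≤ (B *ᵥ w) i := by
      intro i
      have h1 : ε * w i ≤ (M *ᵥ z) i := by
        have := mul_le_mul_of_nonneg_right (hεle i) (hwpos i).le
        rwa [div_mul_cancel₀ _ (hwpos i).ne'] at this
      rw [hkey i]; nlinarith [h1]
    set c : ℝ := ∑ i, x i with hc
    have hcpos : 0 < c := Finset.sum_pos (fun i _ => hxpos i) univ_nonempty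
    set u' : n → ℝ := c⁻¹ • x with hu'
    have hu'sim : u' ∈ stdSimplex ℝ n := by
      constructor
      · intro i; exact mul_nonneg (inv_nonneg.mpr hcpos.le) (hxpos i).le
      · simp [hu', Pi.smul_apply, smul_eq_mul, ← Finset.mul_sum, ← hc,
          inv_mul_cancel₀ hcpos.ne']
    have hMu' : M *ᵥ u' = c⁻¹ • w := by
      rw [hu', Matrix.mulVec_smul, hw]
    have hnew : ∀ i, (r + ε) * (M *ᵥ u') i ≤ (B *ᵥ (M *ᵥ u')) i := by
      intro i
      rw [hMu', Matrix.mulVec_smul]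
      simp only [Pi.smul_apply, smul_eq_mul]
      calc (r + ε) * (c⁻¹ * w i) = c⁻¹ * ((r + ε) * w i) := by ring
        _ ≤ c⁻¹ * (B *ᵥ w) i := by
            exact mul_le_mul_of_nonneg_left (hwineq i) (inv_nonneg.mpr hcpos.le)
    have hrε : r + ε ≤ R := by
      refine bound (M *ᵥ u') (r + ε) (fun i => ?_) hnew
      rw [hMu']
      exact mul_pos (inv_pos.mpr hcpos) (hwpos i)
    have hmem : (⟨u', r + ε⟩ : (n → ℝ) × ℝ) ∈ C :=
      ⟨hu'sim, ⟨add_nonneg hpIcc.1 hεpos.le, hrε⟩, hnew⟩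
    have h2 : r + ε ≤ r := hpmax hmem
    linarith
  have heig : B *ᵥ x = r • x := by
    funext i; rw [heq i]; simp [Pi.smul_apply, smul_eq_mul]
  have hrpos : 0 < r := by
    have i := Classical.arbitrary n
    obtain ⟨j, hj⟩ := row_pos B hB hirr i
    have h1 : 0 < (B *ᵥ x) i := by
      rw [mulVecapp]
      exact Finset.sum_pos' (fun l _ => mul_nonneg (hB i l) (hxpos l).le)
        ⟨j, mem_univ j, mul_pos hj (hxpos j)⟩
    rw [heq i] at h1
    by_contra hr
    push_neg at hr
    nlinarith [hxpos i]
  exact ⟨x, r, hxpos, hrpos, heig⟩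

lemma mem_spectrum_of_eigen (A : Matrix n n ℝ) {r : ℝ} {x : n → ℝ} (hx : x ≠ 0)
    (h : A *ᵥ x = r • x) : r ∈ spectrum ℝ A := by
  rw [spectrum.mem_iff]
  intro hunit
  have h0 : (algebraMap ℝ (Matrix n n ℝ) r - A) *ᵥ x = 0 := by
    rw [Matrix.sub_mulVec, Algebra.algebraMap_eq_smul_one, Matrix.smul_mulVec,
      Matrix.one_mulVec, h, sub_self]
  have hinj := Matrix.mulVec_injective_iff_isUnit.mpr hunit
  exact hx (hinj (by rw [h0, Matrix.mulVec_zero]))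

end EntropyAux

namespace EntropyAux

variable {n : Type*} [Fintype n] [DecidableEq n]

lemma gibbs (p a : n → ℝ) (hp : ∀ j, 0 ≤ p j) (hpsum : ∑ j, p j = 1)
    (ha : ∀ j, 0 ≤ a j) (hpa : ∀ j, 0 < p j → 0 < a j) :
    ∑ j, (if 0 < p j then p j * Real.log (a j / p j) else 0) ≤ Real.log (∑ j, a j) := by
  set A := ∑ j, a j with hA
  have hex : ∃ j, 0 < p j := exists_pos_of_sum_pos (by rw [hpsum]; norm_num)
  have hApos : 0 < A := by
    obtain ⟨j, hj⟩ := hex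
    exact Finset.sum_pos' (fun l _ => ha l) ⟨j, mem_univ j, hpa j hj⟩
  have key : ∀ j, (if 0 < p j then p j * Real.log (a j / p j) else 0) - p j * Real.log A
      ≤ a j / A - p j := by
    intro j
    by_cases hj : 0 < p j
    · rw [if_pos hj]
      have haj := hpa j hj
      have h1 : 0 < a j / (p j * A) := by positivity
      have h2 := Real.log_le_sub_one_of_pos h1
      have h3 : Real.log (a j / (p j * A)) = Real.log (a j / p j) - Real.log A := by
        rw [Real.log_div haj.ne' (by positivity), Real.log_div haj.ne' hj.ne',
          Real.log_mul hj.ne' hApos.ne']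
        ring
      have h4 : p j * Real.log (a j / (p j * A)) ≤ p j * (a j / (p j * A) - 1) :=
        mul_le_mul_of_nonneg_left h2 hj.le
      rw [h3, mul_sub] at h4
      have h5 : p j * (a j / (p j * A) - 1) = a j / A - p j := by
        field_simp
      rw [h5] at h4
      linarith
    · rw [if_neg hj]
      have h0 : p j = 0 := le_antisymm (not_lt.mp hj) (hp j)
      rw [h0]
      have : 0 ≤ a j / A := div_nonneg (ha j) hApos.le
      simp only [zero_mul, sub_zero, zero_sub]
      linarith
  calc ∑ j, (if 0 < p j then p j * Real.log (a j / p j) else 0)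
      = ∑ j, ((if 0 < p j then p j * Real.log (a j / p j) else 0) - p j * Real.log A)
        + (∑ j, p j) * Real.log A := by
        rw [Finset.sum_sub_distrib, ← Finset.sum_mul]; ring
    _ ≤ (∑ j, (a j / A - p j)) + Real.log A := by
        rw [hpsum, one_mul]
        exact add_le_add_left (Finset.sum_le_sum fun j _ => key j) _
    _ = Real.log A := by
        rw [Finset.sum_sub_distrib, ← Finset.sum_div, ← hA, hpsum, div_self hApos.ne']
        ring

end EntropyAux


/-- Entropy-type estimate: if `B` is nonnegative irreducible with `λ₁(B) > 0`, `P` is a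
Markov transition matrix with stationary distribution `π`, and `P` is supported by `B`
(`p_{ij} > 0 → b_{ij} > 0`), then
`ln λ₁(B) ≥ ∑_{i,j : p_{ij} > 0} π_i p_{ij} ln(b_{ij}/p_{ij})`. -/
theorem log_lam1_ge_entropy_sum
    {n : Type*} [Fintype n] [DecidableEq n]
    (B P : Matrix n n ℝ) (π : n → ℝ)
    (hBnonneg : ∀ i j, 0 ≤ B i j)
    (hBirr : B.IrreducibleMat)
    (hBpos : 0 < lam1 B)
    (hPnonneg : ∀ i j, 0 ≤ P i j)
    (hProw : ∀ i, ∑ j, P i j = 1)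
    (hπnonneg : ∀ i, 0 ≤ π i)
    (hπsum : ∑ i, π i = 1)
    (hstat : ∀ j, ∑ i, π i * P i j = π j)
    (hsupp : ∀ i j, 0 < P i j → 0 < B i j) :
    Real.log (lam1 B) ≥
      ∑ i, ∑ j, if 0 < P i j then π i * P i j * Real.log (B i j / P i j) else 0 := by
  classical
  cases isEmpty_or_nonempty n with
  | inl hemp =>
    exfalso
    haveI : Subsingleton (Matrix n n ℝ) := ⟨fun a b => by ext i j; exact (IsEmpty.false i).elim⟩
    have hsp : spectrum ℝ B = ∅ := by
      ext t
      simp only [Set.mem_empty_iff_false, iff_false, spectrum.mem_iff, not_not]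
      exact isUnit_of_subsingleton _
    rw [lam1, hsp, Real.sSup_empty] at hBpos
    exact lt_irrefl 0 hBpos
  | inr hne =>
    obtain ⟨x, r, hx, hr, heig⟩ := EntropyAux.exists_pos_eigenvector B hBnonneg hBirr
    have hxne : x ≠ 0 := by
      intro h
      have h2 := congrFun h (Classical.arbitrary n)
      exact absurd h2.symm (ne_of_lt (hx _))
    have hrmem : r ∈ spectrum ℝ B := EntropyAux.mem_spectrum_of_eigen B hxne heig
    have hbdd : BddAbove (spectrum ℝ B) := (Matrix.finite_spectrum B).bddAbove
    have hrle : r ≤ lam1 B := le_csSup hbdd hrmem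
    set lam := lam1 B with hlam
    have hlampos : 0 < lam := hBpos
    set a : n → n → ℝ := fun i j => B i j * x j / (lam * x i) with ha
    have heigi : ∀ i, (B *ᵥ x) i = r * x i := fun i => by
      rw [heig]; simp [Pi.smul_apply, smul_eq_mul]
    have mulVecapp : ∀ i, (B *ᵥ x) i = ∑ j, B i j * x j := fun i => by
      simp [Matrix.mulVec, dotProduct]
    have hterm : ∀ i j, (if 0 < P i j then π i * P i j * Real.log (B i j / P i j) else 0)
        = π i * (if 0 < P i j then P i j * Real.log (a i j / P i j) else 0)
          + π i * P i j * Real.log lam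
          + π i * P i j * (Real.log (x i) - Real.log (x j)) := by
      intro i j
      by_cases hij : 0 < P i j
      · rw [if_pos hij, if_pos hij]
        have hb := hsupp i j hij
        have hxi := hx i
        have hxj := hx j
        have hlog1 : Real.log (a i j / P i j)
            = Real.log (B i j / P i j) - Real.log lam - Real.log (x i) + Real.log (x j) := by
          have he : a i j / P i j = (B i j * x j) / (lam * x i * P i j) := by
            simp only [ha]; rw [div_div]
          rw [he, Real.log_div (by positivity) (by positivity),
            Real.log_mul hb.ne' hxj.ne', Real.log_mul (by positivity) hij.ne',
            Real.log_mul hlampos.ne' hxi.ne', Real.log_div hb.ne' hij.ne']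
          ring
        rw [hlog1]; ring
      · have h0 : P i j = 0 := le_antisymm (not_lt.mp hij) (hPnonneg i j)
        rw [if_neg hij, if_neg hij, h0]
        ring
    have hrow : ∀ i, (∑ j, if 0 < P i j then π i * P i j * Real.log (B i j / P i j) else 0)
        = π i * (∑ j, (if 0 < P i j then P i j * Real.log (a i j / P i j) else 0))
          + (∑ j, π i * P i j * Real.log lam)
          + (∑ j, π i * P i j * (Real.log (x i) - Real.log (x j))) := by
      intro i
      rw [Finset.mul_sum, ← Finset.sum_add_distrib, ← Finset.sum_add_distrib]
      exact Finset.sum_congr rfl fun j _ => hterm i j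
    have hS1 : (∑ i, π i * ∑ j, (if 0 < P i j then P i j * Real.log (a i j / P i j) else 0))
        ≤ 0 := by
      apply Finset.sum_nonpos
      intro i _
      have hgb := EntropyAux.gibbs (fun j => P i j) (fun j => a i j) (hPnonneg i) (hProw i)
        (fun j => by
          simp only [ha]
          have := hBnonneg i j; have := (hx j).le; have := hlampos; have := hx i
          positivity)
        (fun j hj => by
          simp only [ha]
          have := hsupp i j hj; have := hx j; have := hlampos; have := hx i
          positivity)
      have hsa : (∑ j, a i j) = r / lam := by
        simp only [ha]
        rw [← Finset.sum_div,
          show (∑ j, B i j * x j) = r * x i from (mulVecapp i).symm.trans (heigi i),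
          mul_comm r (x i), mul_comm lam (x i), mul_div_mul_left _ _ (hx i).ne']
      have hle0 : Real.log (r / lam) ≤ 0 :=
        Real.log_nonpos (by positivity) ((div_le_one hlampos).mpr hrle)
      have hG : (∑ j, (if 0 < P i j then P i j * Real.log (a i j / P i j) else 0)) ≤ 0 := by
        calc (∑ j, (if 0 < P i j then P i j * Real.log (a i j / P i j) else 0))
            ≤ Real.log (∑ j, a i j) := hgb
          _ = Real.log (r / lam) := by rw [hsa]
          _ ≤ 0 := hle0
      have := mul_le_mul_of_nonneg_left hG (hπnonneg i)
      simpa using this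
    have hS2 : (∑ i, ∑ j, π i * P i j * Real.log lam) = Real.log lam := by
      have hrow2 : ∀ i, (∑ j, π i * P i j * Real.log lam) = π i * Real.log lam := by
        intro i
        calc (∑ j, π i * P i j * Real.log lam)
            = ∑ j, (π i * Real.log lam) * P i j :=
              Finset.sum_congr rfl fun j _ => by ring
          _ = (π i * Real.log lam) * ∑ j, P i j := by rw [Finset.mul_sum]
          _ = π i * Real.log lam := by rw [hProw i, mul_one]
      rw [Finset.sum_congr rfl fun i _ => hrow2 i, ← Finset.sum_mul, hπsum, one_mul]
    have hS3 : (∑ i, ∑ j, π i * P i j * (Real.log (x i) - Real.log (x j))) = 0 := by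
      have h1 : (∑ i, ∑ j, π i * P i j * Real.log (x i)) = ∑ i, π i * Real.log (x i) := by
        refine Finset.sum_congr rfl fun i _ => ?_
        calc (∑ j, π i * P i j * Real.log (x i))
            = ∑ j, (π i * Real.log (x i)) * P i j :=
              Finset.sum_congr rfl fun j _ => by ring
          _ = (π i * Real.log (x i)) * ∑ j, P i j := by rw [Finset.mul_sum]
          _ = π i * Real.log (x i) := by rw [hProw i, mul_one]
      have h2 : (∑ i, ∑ j, π i * P i j * Real.log (x j)) = ∑ j, π j * Real.log (x j) := by
        rw [Finset.sum_comm]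
        refine Finset.sum_congr rfl fun j _ => ?_
        calc (∑ i, π i * P i j * Real.log (x j))
            = (∑ i, π i * P i j) * Real.log (x j) := by rw [Finset.sum_mul]
          _ = π j * Real.log (x j) := by rw [hstat j]
      calc (∑ i, ∑ j, π i * P i j * (Real.log (x i) - Real.log (x j)))
          = ∑ i, ∑ j, (π i * P i j * Real.log (x i) - π i * P i j * Real.log (x j)) :=
            Finset.sum_congr rfl fun i _ => Finset.sum_congr rfl fun j _ => by ring
        _ = (∑ i, ∑ j, π i * P i j * Real.log (x i))
            - (∑ i, ∑ j, π i * P i j * Real.log (x j)) := by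
            rw [← Finset.sum_sub_distrib]
            exact Finset.sum_congr rfl fun i _ => by rw [Finset.sum_sub_distrib]
        _ = 0 := by rw [h1, h2, sub_self]
    have htotal : (∑ i, ∑ j, if 0 < P i j then π i * P i j * Real.log (B i j / P i j) else 0)
        = (∑ i, π i * ∑ j, (if 0 < P i j then P i j * Real.log (a i j / P i j) else 0))
          + (∑ i, ∑ j, π i * P i j * Real.log lam)
          + (∑ i, ∑ j, π i * P i j * (Real.log (x i) - Real.log (x j))) := by
      rw [← Finset.sum_add_distrib, ← Finset.sum_add_distrib]
      exact Finset.sum_congr rfl fun i _ => hrow i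
    rw [ge_iff_le, htotal, hS2, hS3, add_zero]
    linarith [hS1]
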